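/- Let X = ℙⁿ over ℚ with homogeneous coordinates x_0, …, x_n, let S = {∞} be the archimedean place, and let D_i be the hyperplane x_i = 0. Let D = ∑_{i=1}^n a_i D_i with positive integers a_i. Then the set R = {(b : 1 : 1 : ⋯ : 1) : b ∈ ℤ} is an infinite set of (D, S)-integral points on X, i.e. an infinite subset of ℙⁿ(ℚ) avoiding D on which Weil functions for D are bounded at all non-archimedean places. -/

import Mathlib

/-- Homogeneous coordinates of the point `(b : 1 : 1 : ⋯ : 1)` of `ℙⁿ(ℚ)`. -/
def stdPt (n : ℕ) (b : ℤ) : Fin (n + 1) → ℚ := fun j => if j = 0 then (b : ℚ) else 1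

/-- The sharpness example over `ℤ`: on `X = ℙⁿ_ℚ` with `S = {∞}`, let `Dᵢ` be the
hyperplane `xᵢ = 0` and `D = ∑_{i=1}^n aᵢ Dᵢ` with positive integers `aᵢ`.  Then
`R = {(b : 1 : ⋯ : 1) : b ∈ ℤ}` is an infinite set of `(D, S)`-integral points:
distinct `b` give distinct projective points (so `R` is infinite), every point of
`R` avoids `D`, and the standard Weil function
`λ_{D,p} = ∑ᵢ aᵢ · log (maxⱼ |xⱼ|_p / |x_i|_p)` is `≤ 0` at every
non-archimedean place `p`. -/
theorem stmt_19 (n : ℕ) (hn : 1 ≤ n) (a : Fin n → ℕ) (ha : ∀ i, 0 < a i) :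
    (∀ b c : ℤ, (∃ t : ℚ, t ≠ 0 ∧ stdPt n b = t • stdPt n c) → b = c) ∧
    (∀ (b : ℤ) (i : Fin n), stdPt n b i.succ ≠ 0) ∧
    (∀ p : ℕ, p.Prime → ∀ b : ℤ,
      ∑ i : Fin n, (a i : ℝ) *
        Real.log
          (((Finset.univ.sup' Finset.univ_nonempty
              fun j : Fin (n + 1) => padicNorm p (stdPt n b j) : ℚ) : ℝ) /
            ((padicNorm p (stdPt n b i.succ) : ℚ) : ℝ)) ≤ 0) := by
  have hnz : ((⟨1, by omega⟩ : Fin (n + 1)) : Fin (n+1)) ≠ 0 := by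
    simp [Fin.ext_iff]
  refine ⟨?_, ?_, ?_⟩
  · rintro b c ⟨t, ht, h⟩
    have h1 := congrFun h ⟨1, by omega⟩
    have h0 := congrFun h 0
    simp [stdPt, hnz] at h1 h0
    rw [← h1, one_mul] at h0
    exact_mod_cast h0
  · intro b i
    simp [stdPt, Fin.succ_ne_zero]
  · intro p hp b
    have : Fact p.Prime := ⟨hp⟩
    have hsup : (Finset.univ.sup' Finset.univ_nonempty
        fun j : Fin (n + 1) => padicNorm p (stdPt n b j)) = 1 := by
      apply le_antisymm
      · apply Finset.sup'_le
        intro j _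
        by_cases hj : j = 0
        · simpa [stdPt, hj] using padicNorm.of_int (p := p) b
        · simp [stdPt, hj]
      · have := Finset.le_sup' (f := fun j : Fin (n + 1) => padicNorm p (stdPt n b j))
          (Finset.mem_univ (⟨1, by omega⟩ : Fin (n + 1)))
        exact le_trans (by simp [stdPt, hnz]) this
    apply le_of_eq
    apply Finset.sum_eq_zero
    intro i _
    rw [hsup]
    simp [stdPt, Fin.succ_ne_zero]
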